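/- Let P ⊆ S² be a finite set and suppose the smallest Euclidean enclosing ball of P has radius r̃ < 1 with center c̃. Then c̃ ≠ 0, the sphere ∂B(c̃, r̃) intersects S² in a spherical circle, and the spherical circle with center c̃/‖c̃‖ and radius arcsin r̃ encloses P; moreover no spherical circle of smaller radius encloses P. -/

import Mathlib

open scoped RealInnerProductSpace
open Real

local notation "E" => EuclideanSpace ℝ (Fin 3)

set_option maxHeartbeats 1000000 in
theorem smallest_circle_from_smallest_ball (P : Finset E) (hcard : 2 ≤ P.card)
    (hsphere : ∀ x ∈ P, ‖x‖ = 1)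
    (ct : E) (rt : ℝ) (hrt : rt < 1)
    (hencl : ∀ x ∈ P, x ∈ Metric.closedBall ct rt)
    (hmin : ∀ (c' : E) (r' : ℝ), (∀ x ∈ P, x ∈ Metric.closedBall c' r') → rt ≤ r') :
    ct ≠ 0 ∧
      (∀ x : E, ‖x‖ = 1 → (dist x ct = rt ↔
        Real.arccos ⟪‖ct‖⁻¹ • ct, x⟫ = Real.arcsin rt)) ∧
      (∀ x ∈ P, Real.arccos ⟪‖ct‖⁻¹ • ct, x⟫ ≤ Real.arcsin rt) ∧
      (∀ (c' : E) (r' : ℝ), ‖c'‖ = 1 →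
        (∀ x ∈ P, Real.arccos ⟪c', x⟫ ≤ r') → Real.arcsin rt ≤ r') := by
  obtain ⟨x0, hx0⟩ : ∃ x, x ∈ P := (Finset.card_pos.mp (by omega)).exists_mem
  have hrt0 : 0 ≤ rt := le_trans dist_nonneg (Metric.mem_closedBall.mp (hencl x0 hx0))
  have hct : ct ≠ 0 := by
    intro h
    have h1 : dist x0 ct ≤ rt := Metric.mem_closedBall.mp (hencl x0 hx0)
    rw [h, dist_zero_right, hsphere x0 hx0] at h1
    linarith
  set s : ℝ := ‖ct‖ with hsdef
  have hs : 0 < s := norm_pos_iff.mpr hct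
  clear_value s
  -- inner-product estimate for points of P
  have key : ∀ x ∈ P, (1 + s ^ 2 - rt ^ 2) / 2 ≤ ⟪ct, x⟫ := by
    intro x hx
    have h1 : dist x ct ≤ rt := Metric.mem_closedBall.mp (hencl x hx)
    have h2 : dist x ct ^ 2 ≤ rt ^ 2 := by
      apply pow_le_pow_left₀ dist_nonneg h1
    rw [dist_eq_norm, norm_sub_sq_real, hsphere x hx] at h2
    have := real_inner_comm ct x
    nlinarith [h2]
  have hone2 : 0 < 1 - rt ^ 2 := by nlinarith
  set b : ℝ := Real.sqrt (1 - rt ^ 2) with hbdef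
  have hb2 : b ^ 2 = 1 - rt ^ 2 := Real.sq_sqrt hone2.le
  have hb0 : 0 < b := Real.sqrt_pos.mpr hone2
  -- key geometric fact: ‖ct‖² = 1 - rt²
  have hseq : s ^ 2 = 1 - rt ^ 2 := by
    set h : ℝ := (1 + s ^ 2 - rt ^ 2) / (2 * s) with hhdef
    have hh0 : 0 < h := by
      apply div_pos (by nlinarith) (by linarith)
    set c' : E := (h / s) • ct with hc'def
    have hinner : ∀ x ∈ P, h ^ 2 ≤ ⟪c', x⟫ := by
      intro x hx
      have h1 := key x hx
      have h2 : ⟪c', x⟫ = (h / s) * ⟪ct, x⟫ := real_inner_smul_left _ _ _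
      rw [h2]
      have hhs : h * s = (1 + s ^ 2 - rt ^ 2) / 2 := by
        rw [hhdef]; field_simp
      have : (h / s) * ((1 + s ^ 2 - rt ^ 2) / 2) ≤ (h / s) * ⟪ct, x⟫ := by
        apply mul_le_mul_of_nonneg_left h1 (by positivity)
      calc h ^ 2 = (h / s) * (h * s) := by field_simp
        _ = (h / s) * ((1 + s ^ 2 - rt ^ 2) / 2) := by rw [hhs]
        _ ≤ (h / s) * ⟪ct, x⟫ := this
    have hdist2 : ∀ x ∈ P, dist x c' ^ 2 ≤ 1 - h ^ 2 := by
      intro x hx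
      have hnc' : ‖c'‖ = h := by
        rw [hc'def, norm_smul, Real.norm_eq_abs, abs_of_pos (by positivity), ← hsdef]
        field_simp
      rw [dist_eq_norm, norm_sub_sq_real, hsphere x hx, hnc']
      have h3 := hinner x hx
      have h4 := real_inner_comm x c'
      nlinarith [h3, h4]
    have h1h : 0 ≤ 1 - h ^ 2 := le_trans (sq_nonneg _) (hdist2 x0 hx0)
    have hrle : rt ≤ Real.sqrt (1 - h ^ 2) := by
      apply hmin c' (Real.sqrt (1 - h ^ 2))
      intro x hx
      rw [Metric.mem_closedBall]
      rw [Real.le_sqrt dist_nonneg h1h]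
      exact hdist2 x hx
    have hrt2 : rt ^ 2 ≤ 1 - h ^ 2 := by
      have := Real.sq_sqrt h1h
      nlinarith
    -- h² ≤ b², and h ≥ b by AM-GM, so h = b and s = b
    have hhs2 : h * (2 * s) = 1 + s ^ 2 - rt ^ 2 := by
      rw [hhdef]; field_simp
    have hhgeb : b ≤ h := by
      nlinarith [sq_nonneg (s - b)]
    have hhleb : h ≤ b := by nlinarith
    have hheqb : h = b := le_antisymm hhleb hhgeb
    nlinarith [sq_nonneg (s - b)]
  have hsb : Real.sqrt (1 - rt ^ 2) = s := by
    rw [← hseq]; exact Real.sqrt_sq hs.le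
  have hcos : Real.cos (Real.arcsin rt) = s := by
    rw [Real.cos_arcsin, hsb]
  set u : E := s⁻¹ • ct with hudef
  have hnu : ‖u‖ = 1 := by
    rw [hudef, norm_smul, Real.norm_eq_abs, abs_of_pos (by positivity), ← hsdef]
    field_simp
  have hinnu : ∀ x : E, ⟪u, x⟫ = s⁻¹ * ⟪ct, x⟫ := fun x => by
    rw [hudef]; exact real_inner_smul_left _ _ _
  clear_value u
  have hbound : ∀ x : E, ‖x‖ = 1 → -1 ≤ ⟪u, x⟫ ∧ ⟪u, x⟫ ≤ 1 := by
    intro x hx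
    have := abs_real_inner_le_norm u x
    rw [hnu, hx] at this
    constructor <;> [linarith [neg_abs_le (⟪u, x⟫)]; linarith [le_abs_self (⟪u, x⟫)]]
  have harcsin_mem : 0 ≤ Real.arcsin rt ∧ Real.arcsin rt ≤ π := by
    constructor
    · exact Real.arcsin_nonneg.mpr hrt0
    · linarith [Real.arcsin_le_pi_div_two rt, Real.pi_pos]
  refine ⟨hct, ?_, ?_, ?_⟩
  · -- the characterization of the spherical circle
    intro x hx
    have hexp : dist x ct ^ 2 = 1 - 2 * (s * ⟪u, x⟫) + s ^ 2 := by
      rw [dist_eq_norm, norm_sub_sq_real, hx, real_inner_comm ct x, hinnu x, ← hsdef]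
      have hss : s * (s⁻¹ * ⟪ct, x⟫) = ⟪ct, x⟫ := by
        rw [← mul_assoc, mul_inv_cancel₀ hs.ne', one_mul]
      rw [hss]; ring
    constructor
    · intro h
      have h2 : dist x ct ^ 2 = rt ^ 2 := by rw [h]
      have hin : ⟪u, x⟫ = s := by
        rw [hexp] at h2
        have : 2 * (s * ⟪u, x⟫) = 2 * s ^ 2 := by nlinarith
        nlinarith
      rw [hin, ← hcos]
      exact Real.arccos_cos harcsin_mem.1 harcsin_mem.2
    · intro h
      have hin : ⟪u, x⟫ = s := by
        have := Real.cos_arccos (hbound x hx).1 (hbound x hx).2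
        rw [h, hcos] at this
        linarith
      have h2 : dist x ct ^ 2 = rt ^ 2 := by rw [hexp, hin]; nlinarith
      nlinarith [dist_nonneg (x := x) (y := ct), sq_nonneg (dist x ct - rt),
        sq_nonneg (dist x ct + rt)]
  · -- enclosure
    intro x hx
    have h1 := key x hx
    have h2 : s ≤ ⟪u, x⟫ := by
      rw [hinnu x]
      have hss : s * s ≤ ⟪ct, x⟫ := by nlinarith [h1, hseq]
      calc s = s⁻¹ * (s * s) := by field_simp
        _ ≤ s⁻¹ * ⟪ct, x⟫ := mul_le_mul_of_nonneg_left hss (by positivity)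
    -- arccos antitone via arcsin
    have hb1 := (hbound x (hsphere x hx)).2
    have hmono : Real.arcsin s ≤ Real.arcsin ⟪u, x⟫ := Real.monotone_arcsin h2
    have e1 : Real.arccos ⟪u, x⟫ = π / 2 - Real.arcsin ⟪u, x⟫ :=
      Real.arccos_eq_pi_div_two_sub_arcsin _
    have e2 : Real.arcsin rt = π / 2 - Real.arccos rt :=
      Real.arcsin_eq_pi_div_two_sub_arccos rt
    have hacs : Real.arccos rt = Real.arcsin (Real.sqrt (1 - rt ^ 2)) :=
      Real.arccos_eq_arcsin hrt0
    rw [e1, e2, hacs, hsb]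
    linarith
  · -- minimality
    intro c' r' hnc' hc'
    have hr'0 : 0 ≤ r' := le_trans (Real.arccos_nonneg _) (hc' x0 hx0)
    by_cases hcase : π / 2 ≤ r'
    · linarith [Real.arcsin_le_pi_div_two rt]
    · push_neg at hcase
      have hsin : ∀ x ∈ P, x ∈ Metric.closedBall (Real.cos r' • c') (Real.sin r') := by
        intro x hx
        have hb' : -1 ≤ ⟪c', x⟫ ∧ ⟪c', x⟫ ≤ 1 := by
          have := abs_real_inner_le_norm c' x
          rw [hnc', hsphere x hx] at this
          constructor <;> [linarith [neg_abs_le (⟪c', x⟫)]; linarith [le_abs_self (⟪c', x⟫)]]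
        have hge : Real.cos r' ≤ ⟪c', x⟫ := by
          have h1 : Real.cos r' ≤ Real.cos (Real.arccos ⟪c', x⟫) := by
            apply Real.cos_le_cos_of_nonneg_of_le_pi (Real.arccos_nonneg _)
              (by linarith [Real.pi_pos]) (hc' x hx)
          rwa [Real.cos_arccos hb'.1 hb'.2] at h1
        rw [Metric.mem_closedBall, dist_eq_norm]
        have hsinr : 0 ≤ Real.sin r' := Real.sin_nonneg_of_nonneg_of_le_pi hr'0
          (by linarith [Real.pi_pos])
        have hexp : ‖x - Real.cos r' • c'‖ ^ 2 = 1 - 2 * (Real.cos r' * ⟪c', x⟫)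
            + Real.cos r' ^ 2 := by
          rw [norm_sub_sq_real, hsphere x hx, real_inner_comm, real_inner_smul_left]
          rw [norm_smul, Real.norm_eq_abs, hnc']
          rw [mul_one, sq_abs]
          ring
        have hcosnn : 0 ≤ Real.cos r' := Real.cos_nonneg_of_mem_Icc
          ⟨by linarith [Real.pi_pos], hcase.le⟩
        have hle2 : ‖x - Real.cos r' • c'‖ ^ 2 ≤ Real.sin r' ^ 2 := by
          rw [hexp]
          have := Real.sin_sq_add_cos_sq r'
          nlinarith [mul_le_mul_of_nonneg_left hge hcosnn]
        nlinarith [norm_nonneg (x - Real.cos r' • c')]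
      have hrle : rt ≤ Real.sin r' := hmin _ _ hsin
      calc Real.arcsin rt ≤ Real.arcsin (Real.sin r') := Real.monotone_arcsin hrle
        _ = r' := Real.arcsin_sin (by linarith [Real.pi_pos]) hcase.le
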